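/- arXiv:1504.03413 — 5 statements merged into one kernel-verified Lean document; each statement's English description precedes it below -/
import Mathlib

section
/- Homogeneous blinding fraction: Let N, N1 be natural numbers with 0 < N1 ≤ N, let z > 0, σ > 0, η ≥ 0, P ∈ (0,1], Δ > 0 be real numbers with PΔ > 0, and M a positive natural number. With all weights equal to z, all noise variances equal to σ², all SNRs equal to η, and all attack parameters equal to (P, Δ), the blinding condition ∑_{i=1}^{N1} z(2PΔ − ησ²) = ∑_{i=N1+1}^{N} z η σ² holds if and only if N1/N = (1/2)·(ησ²)/(PΔ). In particular, the deflection coefficient of the global test statistic is zero exactly when the fraction of Byzantine nodes equals ησ²/(2PΔ). -/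
open Finset

/-- **Homogeneous blinding fraction.** With identical weights, variances, SNRs and attack
parameters, the blinding condition holds iff the fraction of Byzantine nodes equals
`η σ² / (2 P Δ)`. -/
theorem homogeneous_blinding_fraction
    (N N1 : ℕ) (hN1pos : 0 < N1) (hN1 : N1 ≤ N)
    (z σ η P Δ : ℝ) (M : ℕ) (hM : 0 < M)
    (hz : 0 < z) (hσ : 0 < σ) (hη : 0 ≤ η)
    (hP : P ∈ Set.Ioc (0 : ℝ) 1) (hΔ : 0 < Δ) (hPΔ : 0 < P * Δ) :
    (∑ _i ∈ Finset.range N1, z * (2 * P * Δ - η * σ ^ 2))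
        = (∑ _i ∈ Finset.Ico N1 N, z * (η * σ ^ 2)) ↔
      (N1 : ℝ) / N = (1 / 2) * (η * σ ^ 2) / (P * Δ) := by
  have hNpos : 0 < N := lt_of_lt_of_le hN1pos hN1
  have hNr : (0:ℝ) < N := Nat.cast_pos.mpr hNpos
  rw [Finset.sum_const, Finset.sum_const, Nat.card_Ico, Finset.card_range,
    nsmul_eq_mul, nsmul_eq_mul]
  have hsub : ((N - N1 : ℕ) : ℝ) = (N : ℝ) - N1 := Nat.cast_sub hN1
  rw [hsub, div_eq_div_iff hNr.ne' hPΔ.ne']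
  constructor
  · intro h
    nlinarith [hz.ne']
  · intro h
    nlinarith [hz.ne']
end

section
/- Eigenvalues of the modified Perron matrix lie in the unit disc (Lemma 3, part 2): Let N : ℕ, let G be a simple graph on Fin N, let w : Fin N → ℝ with w i > 0 for all i, let ε > 0 satisfy ε * (∑ over j adjacent to i of w j) ≤ 1 for every node i, and let Ŵ be the modified Perron matrix. Then every eigenvalue μ ∈ ℂ of the complexification of Ŵ (i.e., every μ in the spectrum of Ŵ.map Complex.ofReal, equivalently every root of its characteristic polynomial) satisfies ‖μ‖ ≤ 1. -/
open Finset

/-- The modified Perron matrix `Ŵ = I − ε (T ⊗ L)` of the robust weighted average consensus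
algorithm. -/
def modifiedPerron (N : ℕ) (G : SimpleGraph (Fin N)) [DecidableRel G.Adj]
    (w : Fin N → ℝ) (ε : ℝ) : Matrix (Fin N) (Fin N) ℝ :=
  fun i j =>
    if i = j then 1 - ε * ∑ k ∈ G.neighborFinset i, w k
    else if G.Adj i j then ε * w j else 0

/-- **Eigenvalues of the modified Perron matrix lie in the unit disc (Lemma 3, part 2).**
For positive weights and `0 < ε` with `ε ∑_{j ∈ N_i} w j ≤ 1` for every node `i`, every
eigenvalue `μ ∈ ℂ` of the complexification of `Ŵ` satisfies `‖μ‖ ≤ 1`. -/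
theorem modifiedPerron_spectrum_subset_unit_disc (N : ℕ)
    (G : SimpleGraph (Fin N)) [DecidableRel G.Adj]
    (w : Fin N → ℝ) (hw : ∀ i, 0 < w i) (ε : ℝ) (hε : 0 < ε)
    (hcond : ∀ i, ε * ∑ j ∈ G.neighborFinset i, w j ≤ 1) :
    ∀ μ : ℂ, μ ∈ spectrum ℂ ((modifiedPerron N G w ε).map Complex.ofReal) → ‖μ‖ ≤ 1 := by
  intro μ hμ
  set A := (modifiedPerron N G w ε).map Complex.ofReal with hA
  have hμ' : Module.End.HasEigenvalue (Matrix.toLin' A) μ := by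
    rw [show Matrix.toLin' A = Matrix.toLinAlgEquiv' A by
        rfl,
      Module.End.hasEigenvalue_iff_mem_spectrum, AlgEquiv.spectrum_eq]
    exact hμ
  obtain ⟨k, hk⟩ := eigenvalue_mem_ball hμ'
  rw [Metric.mem_closedBall, dist_eq_norm] at hk
  -- compute the radius
  have hsum : ∑ j ∈ Finset.univ.erase k, ‖A k j‖
      = ε * ∑ j ∈ G.neighborFinset k, w j := by
    rw [Finset.mul_sum]
    rw [show G.neighborFinset k = (Finset.univ.erase k).filter (G.Adj k) by
      ext j
      simp only [SimpleGraph.mem_neighborFinset, Finset.mem_filter, Finset.mem_erase,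
        Finset.mem_univ, and_true, true_and]
      exact ⟨fun h => ⟨(G.ne_of_adj h).symm, h⟩, fun h => h.2⟩]
    rw [Finset.sum_filter]
    refine Finset.sum_congr rfl fun j hj => ?_
    rw [Finset.mem_erase] at hj
    simp only [hA, Matrix.map_apply, modifiedPerron, if_neg (Ne.symm hj.1)]
    by_cases h : G.Adj k j
    · simp [h, Complex.norm_real, abs_of_pos hε, abs_of_pos (hw j)]
    · simp [h]
  have hdiag : A k k = Complex.ofReal (1 - ε * ∑ j ∈ G.neighborFinset k, w j) := by
    simp [hA, Matrix.map_apply, modifiedPerron]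
  have h0 : 0 ≤ ε * ∑ j ∈ G.neighborFinset k, w j :=
    mul_nonneg hε.le (Finset.sum_nonneg fun j _ => (hw j).le)
  calc ‖μ‖ ≤ ‖μ - A k k‖ + ‖A k k‖ := by
        simpa using norm_add_le (μ - A k k) (A k k)
    _ ≤ (ε * ∑ j ∈ G.neighborFinset k, w j) + (1 - ε * ∑ j ∈ G.neighborFinset k, w j) := by
        refine add_le_add (hsum ▸ hk) ?_
        rw [hdiag, Complex.norm_real, Real.norm_eq_abs,
          abs_of_nonneg (by linarith [hcond k])]
    _ = 1 := by ring
end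

section
/- Primitivity of the modified Perron matrix (Lemma 3, part 3): Let N : ℕ with N ≥ 1, let G be a connected simple graph on Fin N, let w : Fin N → ℝ with w i > 0 for all i, let ε > 0 satisfy ε * (∑ over j adjacent to i of w j) < 1 for every node i (i.e., 0 < ε < 1 / max_i ∑_{j∈N_i} w_j), and let Ŵ be the modified Perron matrix. Then Ŵ is primitive: there exists a natural number m such that every entry of Ŵ^m is strictly positive (∃ m, ∀ i j, 0 < (Ŵ^m) i j). -/
open Finset

/-- **Primitivity of the modified Perron matrix (Lemma 3, part 3).**
If the graph is connected, the weights are positive and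
`0 < ε` with `ε ∑_{j ∈ N_i} w j < 1` for every node `i`, then `Ŵ` is primitive:
some power of `Ŵ` has all entries strictly positive. -/
theorem modifiedPerron_primitive (N : ℕ) (hN : 1 ≤ N)
    (G : SimpleGraph (Fin N)) [DecidableRel G.Adj] (hG : G.Connected)
    (w : Fin N → ℝ) (hw : ∀ i, 0 < w i) (ε : ℝ) (hε : 0 < ε)
    (hcond : ∀ i, ε * ∑ j ∈ G.neighborFinset i, w j < 1) :
    ∃ m : ℕ, ∀ i j, 0 < ((modifiedPerron N G w ε) ^ m) i j := by
  set A := modifiedPerron N G w ε with hA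
  have hnonneg : ∀ i j, 0 ≤ A i j := by
    intro i j
    show (0:ℝ) ≤ modifiedPerron N G w ε i j
    unfold modifiedPerron
    split_ifs with h1 h2
    · subst h1; linarith [hcond i]
    · exact le_of_lt (mul_pos hε (hw j))
    · exact le_refl 0
  have hdiag : ∀ i, 0 < A i i := by
    intro i
    show (0:ℝ) < modifiedPerron N G w ε i i
    unfold modifiedPerron
    simp only [if_true, if_pos trivial]
    linarith [hcond i]
  have hadj : ∀ i j, G.Adj i j → 0 < A i j := by
    intro i j h
    show (0:ℝ) < modifiedPerron N G w ε i j
    unfold modifiedPerron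
    rw [if_neg h.ne, if_pos h]
    exact mul_pos hε (hw j)
  have hpow : ∀ m : ℕ, ∀ i j, 0 ≤ (A ^ m) i j := by
    intro m
    induction m with
    | zero => intro i j; rw [pow_zero]; by_cases h : i = j <;> simp [Matrix.one_apply, h]
    | succ m ih =>
      intro i j
      rw [pow_succ, Matrix.mul_apply]
      exact Finset.sum_nonneg fun k _ => mul_nonneg (ih i k) (hnonneg k j)
  have key : ∀ m : ℕ, ∀ i j : Fin N, ∀ p : G.Walk i j, p.length ≤ m → 0 < (A ^ m) i j := by
    intro m
    induction m with
    | zero =>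
      intro i j p hp
      have : i = j := (p.eq_of_length_eq_zero (Nat.le_zero.mp hp))
      subst this
      simp [Matrix.one_apply]
    | succ m ih =>
      intro i j p hp
      have hmul : ∀ k, 0 < A i k → 0 < (A ^ m) k j → 0 < (A ^ (m + 1)) i j := by
        intro k h1 h2
        rw [pow_succ', Matrix.mul_apply]
        apply Finset.sum_pos' (fun l _ => mul_nonneg (hnonneg i l)
          (hpow m _ _))
        exact ⟨k, Finset.mem_univ k, mul_pos h1 h2⟩
      cases p with
      | nil => exact hmul i (hdiag i) (ih i i SimpleGraph.Walk.nil (Nat.zero_le m))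
      | cons h q =>
        exact hmul _ (hadj _ _ h) (ih _ _ q (by simpa using hp))
  refine ⟨N, fun i j => ?_⟩
  obtain ⟨p⟩ := hG i j
  have hp := p.toPath.2.length_lt
  simp only [Fintype.card_fin] at hp
  exact key N i j p.toPath.1 hp.le
end

section
/- Unique eigenvalue of maximum modulus for the modified Perron matrix: Let N : ℕ with N ≥ 1, let G be a connected simple graph on Fin N, let w : Fin N → ℝ with w i > 0 for all i, let ε > 0 satisfy ε * (∑ over j adjacent to i of w j) < 1 for every node i, and let Ŵ be the modified Perron matrix. Then 1 is an eigenvalue of Ŵ, and every eigenvalue μ ∈ ℂ of the complexification of Ŵ with μ ≠ 1 satisfies ‖μ‖ < 1; i.e., Ŵ has exactly one eigenvalue of maximum modulus 1. -/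
open Finset

/-- Spectrum membership for complex matrices via eigenvectors. -/
lemma mem_spectrum_iff_exists_eigvec {n : ℕ} (M : Matrix (Fin n) (Fin n) ℂ) (μ : ℂ) :
    μ ∈ spectrum ℂ M ↔ ∃ v, v ≠ 0 ∧ M.mulVec v = μ • v := by
  rw [spectrum.mem_iff, Matrix.isUnit_iff_isUnit_det, isUnit_iff_ne_zero, not_not,
    ← Matrix.exists_mulVec_eq_zero_iff]
  constructor
  · rintro ⟨v, hv, h⟩
    refine ⟨v, hv, ?_⟩
    have h' : (algebraMap ℂ (Matrix (Fin n) (Fin n) ℂ) μ).mulVec v - M.mulVec v = 0 := by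
      rw [← Matrix.sub_mulVec]; exact h
    have halg : (algebraMap ℂ (Matrix (Fin n) (Fin n) ℂ) μ).mulVec v = μ • v := by
      rw [Algebra.algebraMap_eq_smul_one, Matrix.smul_mulVec, Matrix.one_mulVec]
    rw [halg, sub_eq_zero] at h'
    exact h'.symm
  · rintro ⟨v, hv, h⟩
    refine ⟨v, hv, ?_⟩
    rw [Matrix.sub_mulVec, Algebra.algebraMap_eq_smul_one, Matrix.smul_mulVec,
      Matrix.one_mulVec, h, sub_self]

/-- Geometric lemma: a point of the disc centred at `a ∈ (0,1]` with radius `1-a`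
other than `1` has modulus `< 1`. -/
lemma disc_lemma (μ : ℂ) (a : ℝ) (ha0 : 0 < a) (ha1 : a ≤ 1)
    (h : ‖μ - (a : ℂ)‖ ≤ 1 - a) (hμ : μ ≠ 1) : ‖μ‖ < 1 := by
  have h2 : ‖μ - (a : ℂ)‖ ^ 2 ≤ (1 - a) ^ 2 := by
    have := norm_nonneg (μ - (a : ℂ)); nlinarith
  have e1 : ‖μ - (a : ℂ)‖ ^ 2 = (μ.re - a) ^ 2 + μ.im ^ 2 := by
    rw [Complex.sq_norm, Complex.normSq_apply]
    simp only [Complex.sub_re, Complex.sub_im, Complex.ofReal_re, Complex.ofReal_im]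
    ring
  have e2 : ‖μ‖ ^ 2 = μ.re ^ 2 + μ.im ^ 2 := by
    rw [Complex.sq_norm, Complex.normSq_apply]; ring
  rw [e1] at h2
  rcases lt_or_ge μ.re 1 with hx | hx
  · have hlt : ‖μ‖ ^ 2 < 1 := by nlinarith
    nlinarith [norm_nonneg μ]
  · exfalso
    have him : μ.im = 0 := by nlinarith
    have hre : μ.re = 1 := by nlinarith
    exact hμ (Complex.ext hre him)

/-- Row sums of the modified Perron matrix are `1`. -/
lemma modifiedPerron_rowsum (N : ℕ) (G : SimpleGraph (Fin N)) [DecidableRel G.Adj]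
    (w : Fin N → ℝ) (ε : ℝ) (i : Fin N) :
    ∑ j, modifiedPerron N G w ε i j = 1 := by
  rw [← Finset.add_sum_erase _ _ (Finset.mem_univ i)]
  have h1 : modifiedPerron N G w ε i i = 1 - ε * ∑ k ∈ G.neighborFinset i, w k := by
    simp [modifiedPerron]
  have h2 : ∑ j ∈ Finset.univ.erase i, modifiedPerron N G w ε i j
      = ε * ∑ k ∈ G.neighborFinset i, w k := by
    have hstep : ∀ j ∈ Finset.univ.erase i,
        modifiedPerron N G w ε i j = if G.Adj i j then ε * w j else 0 := by
      intro j hj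
      have : i ≠ j := (Finset.mem_erase.mp hj).1.symm
      simp [modifiedPerron, this]
    rw [Finset.sum_congr rfl hstep]
    rw [Finset.sum_erase _ (by simp)]
    rw [SimpleGraph.neighborFinset_eq_filter, Finset.mul_sum, Finset.sum_filter]
  rw [h1, h2]; ring

/-- **Unique eigenvalue of maximum modulus for the modified Perron matrix.**
If the graph is connected, the weights are positive and `0 < ε` with
`ε ∑_{j ∈ N_i} w j < 1` for every node `i`, then `1` is an eigenvalue of `Ŵ` and every
other eigenvalue `μ ∈ ℂ` of the complexification of `Ŵ` satisfies `‖μ‖ < 1`. -/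
theorem modifiedPerron_unique_max_modulus_eigenvalue (N : ℕ) (hN : 1 ≤ N)
    (G : SimpleGraph (Fin N)) [DecidableRel G.Adj] (hG : G.Connected)
    (w : Fin N → ℝ) (hw : ∀ i, 0 < w i) (ε : ℝ) (hε : 0 < ε)
    (hcond : ∀ i, ε * ∑ j ∈ G.neighborFinset i, w j < 1) :
    (1 : ℂ) ∈ spectrum ℂ ((modifiedPerron N G w ε).map Complex.ofReal) ∧
      ∀ μ : ℂ, μ ∈ spectrum ℂ ((modifiedPerron N G w ε).map Complex.ofReal) →
        μ ≠ 1 → ‖μ‖ < 1 := by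
  set W := modifiedPerron N G w ε with hW
  set M := W.map Complex.ofReal with hM
  have hMapply : ∀ i j, M i j = (W i j : ℂ) := fun i j => rfl
  constructor
  · rw [mem_spectrum_iff_exists_eigvec]
    refine ⟨fun _ => 1, ?_, ?_⟩
    · intro h
      have := congrFun h ⟨0, hN⟩
      simp at this
    · funext i
      have : (M.mulVec fun _ => 1) i = ∑ j, (W i j : ℂ) := by
        simp [Matrix.mulVec, dotProduct, hMapply]
      rw [this, ← Complex.ofReal_sum, modifiedPerron_rowsum]
      simp
  · intro μ hμspec hμne
    rw [mem_spectrum_iff_exists_eigvec] at hμspec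
    obtain ⟨v, hv, heig⟩ := hμspec
    -- pick coordinate of maximal modulus
    obtain ⟨i, -, hmax⟩ := Finset.exists_max_image Finset.univ (fun j => ‖v j‖)
      ⟨⟨0, hN⟩, Finset.mem_univ _⟩
    have hmax' : ∀ j, ‖v j‖ ≤ ‖v i‖ := fun j => hmax j (Finset.mem_univ j)
    have hvi : 0 < ‖v i‖ := by
      obtain ⟨k, hk⟩ := Function.ne_iff.mp hv
      exact lt_of_lt_of_le (norm_pos_iff.mpr hk) (hmax' k)
    set a : ℝ := 1 - ε * ∑ k ∈ G.neighborFinset i, w k with ha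
    have hS : 0 ≤ ∑ k ∈ G.neighborFinset i, w k :=
      Finset.sum_nonneg fun k _ => (hw k).le
    have ha0 : 0 < a := by have := hcond i; simp [ha]; linarith
    have ha1 : a ≤ 1 := by
      have : 0 ≤ ε * ∑ k ∈ G.neighborFinset i, w k := mul_nonneg hε.le hS
      simp [ha]; linarith
    have hWii : W i i = a := by simp [hW, modifiedPerron, ha]
    have hWnonneg : ∀ j, j ≠ i → 0 ≤ W i j := by
      intro j hj
      simp only [hW, modifiedPerron, if_neg (Ne.symm hj)]
      split
      · exact mul_nonneg hε.le (hw j).le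
      · exact le_refl 0
    have hoffsum : ∑ j ∈ Finset.univ.erase i, W i j = 1 - a := by
      have hrow := modifiedPerron_rowsum N G w ε i
      rw [← hW] at hrow
      rw [← Finset.add_sum_erase _ _ (Finset.mem_univ i), hWii] at hrow
      linarith
    have heqi : ∑ j, (W i j : ℂ) * v j = μ * v i := by
      have := congrFun heig i
      simpa [Matrix.mulVec, dotProduct, hMapply] using this
    have hsplit : (μ - (a : ℂ)) * v i = ∑ j ∈ Finset.univ.erase i, (W i j : ℂ) * v j := by
      have h' := Finset.add_sum_erase Finset.univ (fun j => (W i j : ℂ) * v j)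
        (Finset.mem_univ i)
      rw [heqi] at h'
      rw [hWii] at h'
      have : ∑ j ∈ Finset.univ.erase i, (W i j : ℂ) * v j = μ * v i - (a : ℂ) * v i := by
        rw [← h']; ring
      rw [this]; ring
    have hbound : ‖μ - (a : ℂ)‖ * ‖v i‖ ≤ (1 - a) * ‖v i‖ := by
      calc ‖μ - (a : ℂ)‖ * ‖v i‖ = ‖(μ - (a : ℂ)) * v i‖ := (norm_mul _ _).symm
        _ = ‖∑ j ∈ Finset.univ.erase i, (W i j : ℂ) * v j‖ := by rw [hsplit]
        _ ≤ ∑ j ∈ Finset.univ.erase i, ‖(W i j : ℂ) * v j‖ := norm_sum_le _ _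
        _ ≤ ∑ j ∈ Finset.univ.erase i, W i j * ‖v i‖ := by
            refine Finset.sum_le_sum fun j hj => ?_
            have hji : j ≠ i := (Finset.mem_erase.mp hj).1
            rw [norm_mul]
            have hnrm : ‖((W i j : ℝ) : ℂ)‖ = W i j := by
              rw [Complex.norm_real, Real.norm_eq_abs, abs_of_nonneg (hWnonneg j hji)]
            rw [hnrm]
            exact mul_le_mul_of_nonneg_left (hmax' j) (hWnonneg j hji)
        _ = (1 - a) * ‖v i‖ := by rw [← Finset.sum_mul, hoffsum]
    have hdisc : ‖μ - (a : ℂ)‖ ≤ 1 - a := le_of_mul_le_mul_right hbound hvi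
    exact disc_lemma μ a ha0 ha1 hdisc hμne
end

section
/- Convergence of the robust weighted average consensus algorithm (Theorem 2): Let N : ℕ with N ≥ 1, let G be a connected simple graph on Fin N, let w : Fin N → ℝ with w i > 0 for all i, let ε > 0 satisfy ε * (∑ over j adjacent to i of w j) < 1 for every node i (i.e., 0 < ε < 1 / max_i ∑_{j∈N_i} w_j), and let Ŵ be the modified Perron matrix. Then for every initial state vector x0 : Fin N → ℝ and every node i, the sequence k ↦ ((Ŵ^k).mulVec x0) i converges (as k → ∞, in the sense of Filter.Tendsto along atTop) to the weighted average (∑_{j=1}^{N} w j * x0 j) / (∑_{j=1}^{N} w j). That is, the update rule x_i(k+1) = x_i(k) + ε ∑_{j ∈ N_i} w_j (x_j(k) − x_i(k)) reaches weighted-average consensus asymptotically. -/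
open Finset Filter

namespace ConsensusAux

variable {N : ℕ}


lemma entry_nonneg_pow (A : Matrix (Fin N) (Fin N) ℝ) (h0 : ∀ i j, 0 ≤ A i j) :
    ∀ (k : ℕ) (i j : Fin N), 0 ≤ (A ^ k) i j := by
  intro k
  induction k with
  | zero =>
    intro i j
    simp only [pow_zero, Matrix.one_apply]
    split <;> norm_num
  | succ n ih =>
    intro i j
    rw [pow_succ, Matrix.mul_apply]
    exact Finset.sum_nonneg fun l _ => mul_nonneg (ih i l) (h0 l j)

lemma row_sum_pow (A : Matrix (Fin N) (Fin N) ℝ) (h1 : ∀ i, ∑ j, A i j = 1) :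
    ∀ (k : ℕ) (i : Fin N), ∑ j, (A ^ k) i j = 1 := by
  intro k
  induction k with
  | zero => intro i; simp [Matrix.one_apply]
  | succ n ih =>
    intro i
    simp only [pow_succ, Matrix.mul_apply]
    rw [Finset.sum_comm]
    calc ∑ l, ∑ j, (A ^ n) i l * A l j = ∑ l, (A ^ n) i l * ∑ j, A l j := by
          simp [Finset.mul_sum]
      _ = 1 := by simp [h1, ih]

lemma mulVec_apply' (A : Matrix (Fin N) (Fin N) ℝ) (v : Fin N → ℝ) (i : Fin N) :
    A.mulVec v i = ∑ j, A i j * v j := by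
  simp [Matrix.mulVec, dotProduct]



lemma mulVec_le_sup (A : Matrix (Fin N) (Fin N) ℝ) (h0 : ∀ i j, 0 ≤ A i j)
    (h1 : ∀ i, ∑ j, A i j = 1) (hne : (univ : Finset (Fin N)).Nonempty)
    (v : Fin N → ℝ) (i : Fin N) : A.mulVec v i ≤ univ.sup' hne v := by
  rw [mulVec_apply']
  calc ∑ j, A i j * v j ≤ ∑ j, A i j * univ.sup' hne v :=
        Finset.sum_le_sum fun j _ =>
          mul_le_mul_of_nonneg_left (Finset.le_sup' v (mem_univ j)) (h0 i j)
    _ = univ.sup' hne v := by rw [← Finset.sum_mul, h1, one_mul]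

lemma inf_le_mulVec (A : Matrix (Fin N) (Fin N) ℝ) (h0 : ∀ i j, 0 ≤ A i j)
    (h1 : ∀ i, ∑ j, A i j = 1) (hne : (univ : Finset (Fin N)).Nonempty)
    (v : Fin N → ℝ) (i : Fin N) : univ.inf' hne v ≤ A.mulVec v i := by
  rw [mulVec_apply']
  calc univ.inf' hne v = ∑ j, A i j * univ.inf' hne v := by
        rw [← Finset.sum_mul, h1, one_mul]
    _ ≤ ∑ j, A i j * v j :=
        Finset.sum_le_sum fun j _ =>
          mul_le_mul_of_nonneg_left (Finset.inf'_le v (mem_univ j)) (h0 i j)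

lemma contraction (B : Matrix (Fin N) (Fin N) ℝ) (δ : ℝ) (hδ0 : 0 ≤ δ)
    (hδ : ∀ i j, δ ≤ B i j) (h1 : ∀ i, ∑ j, B i j = 1)
    (hne : (univ : Finset (Fin N)).Nonempty) (v : Fin N → ℝ) :
    univ.sup' hne (B.mulVec v) - univ.inf' hne (B.mulVec v)
      ≤ (1 - 2 * δ) * (univ.sup' hne v - univ.inf' hne v) := by
  set S := univ.sup' hne v with hS
  set I := univ.inf' hne v with hI
  obtain ⟨k0, -, hk0⟩ := Finset.exists_mem_eq_inf' hne v
  obtain ⟨k1, -, hk1⟩ := Finset.exists_mem_eq_sup' hne v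
  have hIS : I ≤ S := le_trans (Finset.inf'_le v (mem_univ hne.choose)) (Finset.le_sup' v (mem_univ hne.choose))
  have h0 : ∀ i j, (0:ℝ) ≤ B i j := fun i j => le_trans hδ0 (hδ i j)
  have hub : ∀ i, B.mulVec v i ≤ S - δ * (S - I) := by
    intro i
    have key : B.mulVec v i = S - ∑ j, B i j * (S - v j) := by
      rw [mulVec_apply']
      have : ∑ j, B i j * (S - v j) = S - ∑ j, B i j * v j := by
        simp only [mul_sub]
        rw [Finset.sum_sub_distrib, ← Finset.sum_mul, h1, one_mul]
      rw [this]; ring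
    have hsingle : δ * (S - I) ≤ ∑ j, B i j * (S - v j) := by
      have h1' : δ * (S - I) ≤ B i k0 * (S - v k0) := by
        rw [← hk0]
        exact mul_le_mul (hδ i k0) le_rfl (by linarith) (h0 i k0)
      refine le_trans h1' (Finset.single_le_sum (f := fun j => B i j * (S - v j)) (fun j _ => ?_) (mem_univ k0))
      exact mul_nonneg (h0 i j) (by have := Finset.le_sup' v (mem_univ j); simpa [← hS] using sub_nonneg.mpr this)
    rw [key]; linarith
  have hlb : ∀ i, I + δ * (S - I) ≤ B.mulVec v i := by
    intro i
    have key : B.mulVec v i = I + ∑ j, B i j * (v j - I) := by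
      rw [mulVec_apply']
      have : ∑ j, B i j * (v j - I) = (∑ j, B i j * v j) - I := by
        simp only [mul_sub]
        rw [Finset.sum_sub_distrib, ← Finset.sum_mul, h1, one_mul]
      rw [this]; ring
    have hsingle : δ * (S - I) ≤ ∑ j, B i j * (v j - I) := by
      have h1' : δ * (S - I) ≤ B i k1 * (v k1 - I) := by
        rw [← hk1]
        exact mul_le_mul (hδ i k1) le_rfl (by linarith) (h0 i k1)
      refine le_trans h1' (Finset.single_le_sum (f := fun j => B i j * (v j - I)) (fun j _ => ?_) (mem_univ k1))
      exact mul_nonneg (h0 i j) (by have := Finset.inf'_le v (mem_univ j); simpa [← hI] using sub_nonneg.mpr this)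
    rw [key]; linarith
  have hsup : univ.sup' hne (B.mulVec v) ≤ S - δ * (S - I) :=
    Finset.sup'_le hne _ fun i _ => hub i
  have hinf : I + δ * (S - I) ≤ univ.inf' hne (B.mulVec v) :=
    Finset.le_inf' hne _ fun i _ => hlb i
  linarith



lemma pos_of_walk (G : SimpleGraph (Fin N)) (A : Matrix (Fin N) (Fin N) ℝ)
    (h0 : ∀ i j, 0 ≤ A i j) (hdiag : ∀ i, 0 < A i i)
    (hadj : ∀ i j, G.Adj i j → 0 < A i j) :
    ∀ {i j : Fin N} (p : G.Walk i j), 0 < (A ^ p.length) i j := by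
  intro i j p
  induction p with
  | nil => simp [Matrix.one_apply]
  | @cons a b c h q ih =>
    rw [SimpleGraph.Walk.length_cons, pow_succ', Matrix.mul_apply]
    refine Finset.sum_pos' (fun l _ => mul_nonneg (h0 a l)
      (entry_nonneg_pow A h0 q.length l c)) ⟨b, mem_univ b, ?_⟩
    exact mul_pos (hadj a b h) ih

lemma pos_pad (A : Matrix (Fin N) (Fin N) ℝ)
    (h0 : ∀ i j, 0 ≤ A i j) (hdiag : ∀ i, 0 < A i i)
    {ℓ : ℕ} {i j : Fin N} (h : 0 < (A ^ ℓ) i j) : 0 < (A ^ (ℓ+1)) i j := by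
  rw [pow_succ', Matrix.mul_apply]
  refine Finset.sum_pos' (fun l _ => mul_nonneg (h0 i l)
    (entry_nonneg_pow A h0 ℓ l j)) ⟨i, mem_univ i, mul_pos (hdiag i) h⟩

lemma pow_card_pos (G : SimpleGraph (Fin N)) [DecidableRel G.Adj] (hG : G.Connected)
    (A : Matrix (Fin N) (Fin N) ℝ)
    (h0 : ∀ i j, 0 ≤ A i j) (hdiag : ∀ i, 0 < A i i)
    (hadj : ∀ i j, G.Adj i j → 0 < A i j) (i j : Fin N) :
    0 < (A ^ N) i j := by
  obtain ⟨p⟩ := hG.preconnected i j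
  have hlen : p.bypass.length < N := by
    simpa using p.bypass_isPath.length_lt
  have hbase : 0 < (A ^ p.bypass.length) i j := pos_of_walk G A h0 hdiag hadj p.bypass
  have : ∀ n, p.bypass.length ≤ n → 0 < (A ^ n) i j := by
    intro n hn
    induction n, hn using Nat.le_induction with
    | base => exact hbase
    | succ n hn ih => exact pos_pad A h0 hdiag ih
  exact this N (le_of_lt hlen)


variable {N : ℕ} (G : SimpleGraph (Fin N)) [DecidableRel G.Adj]
  (w : Fin N → ℝ) (ε : ℝ)

lemma mp_split (i j : Fin N) :
    modifiedPerron N G w ε i j =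
      (if j = i then 1 - ε * ∑ k ∈ G.neighborFinset i, w k else 0)
      + (if j ∈ G.neighborFinset i then ε * w j else 0) := by
  unfold modifiedPerron
  by_cases h : i = j
  · subst h; simp [SimpleGraph.irrefl]
  · rw [if_neg h, if_neg (fun hh : j = i => h hh.symm), zero_add]
    by_cases ha : G.Adj i j
    · rw [if_pos ha, if_pos (by simpa using ha)]
    · rw [if_neg ha, if_neg (by simpa using ha)]

lemma mp_row_sum (i : Fin N) : ∑ j, modifiedPerron N G w ε i j = 1 := by
  simp only [mp_split]
  rw [Finset.sum_add_distrib, Finset.sum_ite_eq' univ i, Finset.sum_ite_mem]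
  simp [Finset.mul_sum, Finset.univ_inter]

lemma mp_left_eig (l : Fin N) :
    ∑ j, w j * modifiedPerron N G w ε j l = w l := by
  have key : ∀ j, w j * modifiedPerron N G w ε j l =
      (if j = l then w l * (1 - ε * ∑ k ∈ G.neighborFinset l, w k) else 0)
      + (if j ∈ G.neighborFinset l then ε * w l * w j else 0) := by
    intro j
    unfold modifiedPerron
    by_cases h : j = l
    · subst h; simp [SimpleGraph.irrefl]
    · rw [if_neg h, if_neg h]
      by_cases ha : G.Adj j l
      · rw [if_pos ha, if_pos (by simpa using ha.symm), zero_add]; ring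
      · rw [if_neg ha,
          if_neg (by simp only [SimpleGraph.mem_neighborFinset]; exact fun hh => ha hh.symm),
          zero_add, mul_zero]
  simp only [key]
  rw [Finset.sum_add_distrib, Finset.sum_ite_eq' univ l, if_pos (mem_univ l),
    Finset.sum_ite_mem, Finset.univ_inter]
  have : ∑ x ∈ G.neighborFinset l, ε * w l * w x
      = (ε * ∑ k ∈ G.neighborFinset l, w k) * w l := by
    calc ∑ x ∈ G.neighborFinset l, ε * w l * w x
        = (ε * w l) * ∑ x ∈ G.neighborFinset l, w x := by
          rw [Finset.mul_sum]
      _ = (ε * ∑ k ∈ G.neighborFinset l, w k) * w l := by ring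
  rw [this]; ring

lemma mp_nonneg (hw : ∀ i, 0 < w i) (hε : 0 < ε)
    (hcond : ∀ i, ε * ∑ j ∈ G.neighborFinset i, w j < 1) (i j : Fin N) :
    0 ≤ modifiedPerron N G w ε i j := by
  unfold modifiedPerron
  split
  · linarith [hcond i]
  · split
    · exact le_of_lt (mul_pos hε (hw j))
    · exact le_refl 0

lemma mp_diag_pos (hε : 0 < ε)
    (hcond : ∀ i, ε * ∑ j ∈ G.neighborFinset i, w j < 1) (i : Fin N) :
    0 < modifiedPerron N G w ε i i := by
  unfold modifiedPerron
  rw [if_pos rfl]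
  linarith [hcond i]

lemma mp_adj_pos (hw : ∀ i, 0 < w i) (hε : 0 < ε) {i j : Fin N} (h : G.Adj i j) :
    0 < modifiedPerron N G w ε i j := by
  unfold modifiedPerron
  rw [if_neg h.ne, if_pos h]
  exact mul_pos hε (hw j)


end ConsensusAux

/-- **Convergence of the robust weighted average consensus algorithm (Theorem 2).**
If the graph is connected, the weights are positive and `0 < ε` with
`ε ∑_{j ∈ N_i} w j < 1` for every node `i`, then for every initial state `x0` the iterates
`Ŵ^k x0` converge at every node to the weighted average `(∑ j, w j * x0 j) / (∑ j, w j)`. -/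
theorem modifiedPerron_consensus_convergence (N : ℕ) (hN : 1 ≤ N)
    (G : SimpleGraph (Fin N)) [DecidableRel G.Adj] (hG : G.Connected)
    (w : Fin N → ℝ) (hw : ∀ i, 0 < w i) (ε : ℝ) (hε : 0 < ε)
    (hcond : ∀ i, ε * ∑ j ∈ G.neighborFinset i, w j < 1) :
    ∀ (x0 : Fin N → ℝ) (i : Fin N),
      Tendsto (fun k : ℕ => (((modifiedPerron N G w ε) ^ k).mulVec x0) i) atTop
        (nhds ((∑ j : Fin N, w j * x0 j) / (∑ j : Fin N, w j))) := by
  intro x0 i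
  haveI : NeZero N := ⟨by omega⟩
  set A := modifiedPerron N G w ε with hA
  have hne : (univ : Finset (Fin N)).Nonempty := univ_nonempty
  have h0 : ∀ a b, 0 ≤ A a b := ConsensusAux.mp_nonneg G w ε hw hε hcond
  have h1 : ∀ a, ∑ b, A a b = 1 := ConsensusAux.mp_row_sum G w ε
  have hleft : ∀ l, ∑ j, w j * A j l = w l := ConsensusAux.mp_left_eig G w ε
  have h0k : ∀ k a b, 0 ≤ (A ^ k) a b := ConsensusAux.entry_nonneg_pow A h0
  have h1k : ∀ k a, ∑ b, (A ^ k) a b = 1 := ConsensusAux.row_sum_pow A h1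
  have hBpos : ∀ a b, 0 < (A ^ N) a b :=
    ConsensusAux.pow_card_pos G hG A h0 (ConsensusAux.mp_diag_pos G w ε hε hcond)
      (fun a b h => ConsensusAux.mp_adj_pos G w ε hw hε h)
  have hprodne : ((univ ×ˢ univ : Finset (Fin N × Fin N))).Nonempty := hne.product hne
  set δ := (univ ×ˢ univ : Finset (Fin N × Fin N)).inf' hprodne (fun p => (A ^ N) p.1 p.2)
    with hδdef
  have hδpos : 0 < δ := by
    obtain ⟨p, -, hp⟩ := Finset.exists_mem_eq_inf' hprodne (fun p => (A ^ N) p.1 p.2)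
    rw [hδdef, hp]; exact hBpos p.1 p.2
  have hδle : ∀ a b, δ ≤ (A ^ N) a b := by
    intro a b
    rw [hδdef]
    exact Finset.inf'_le (fun p : Fin N × Fin N => (A ^ N) p.1 p.2)
      (Finset.mem_product.mpr ⟨mem_univ a, mem_univ b⟩ : (a, b) ∈ univ ×ˢ univ)
  set Mk : ℕ → ℝ := fun k => univ.sup' hne ((A ^ k).mulVec x0) with hMk
  set mk : ℕ → ℝ := fun k => univ.inf' hne ((A ^ k).mulVec x0) with hmk
  -- step relation
  have hstep : ∀ k : ℕ, (A ^ (k+1)).mulVec x0 = A.mulVec ((A ^ k).mulVec x0) := by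
    intro k
    rw [pow_succ', Matrix.mulVec_mulVec]
  -- monotonicity
  have hManti : Antitone Mk := by
    refine antitone_nat_of_succ_le fun k => ?_
    simp only [hMk]
    rw [hstep k]
    exact Finset.sup'_le hne _ fun a _ =>
      ConsensusAux.mulVec_le_sup A h0 h1 hne _ a
  have hmmono : Monotone mk := by
    refine monotone_nat_of_le_succ fun k => ?_
    simp only [hmk]
    rw [hstep k]
    exact Finset.le_inf' hne _ fun a _ =>
      ConsensusAux.inf_le_mulVec A h0 h1 hne _ a
  have hsnn : ∀ k, 0 ≤ Mk k - mk k := by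
    intro k
    have h1' := Finset.inf'_le ((A ^ k).mulVec x0) (mem_univ i)
    have h2' := Finset.le_sup' ((A ^ k).mulVec x0) (mem_univ i)
    simp only [hMk, hmk]; linarith
  -- contraction along multiples of N
  set r : ℝ := max (1 - 2 * δ) 0 with hr
  have hr0 : 0 ≤ r := le_max_right _ _
  have hr1 : r < 1 := by
    rw [hr]; exact max_lt (by linarith) one_pos
  have hBk : ∀ t : ℕ, (A ^ (N * (t+1))).mulVec x0
      = (A ^ N).mulVec ((A ^ (N * t)).mulVec x0) := by
    intro t
    rw [show N * (t+1) = N + N * t by ring, pow_add, Matrix.mulVec_mulVec]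
  have hcontr : ∀ t : ℕ, Mk (N * (t+1)) - mk (N * (t+1)) ≤ r * (Mk (N * t) - mk (N * t)) := by
    intro t
    have h := ConsensusAux.contraction (A ^ N) δ (le_of_lt hδpos) hδle (h1k N) hne
      ((A ^ (N * t)).mulVec x0)
    have h2 : (1 - 2 * δ) * (Mk (N*t) - mk (N*t)) ≤ r * (Mk (N*t) - mk (N*t)) :=
      mul_le_mul_of_nonneg_right (le_max_left _ _) (hsnn _)
    refine le_trans ?_ h2
    simp only [hMk, hmk]
    rw [hBk t]
    exact h
  have hgeo : ∀ t : ℕ, Mk (N * t) - mk (N * t) ≤ r ^ t * (Mk 0 - mk 0) := by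
    intro t
    induction t with
    | zero => simp
    | succ n ih =>
      calc Mk (N * (n+1)) - mk (N * (n+1)) ≤ r * (Mk (N * n) - mk (N * n)) := hcontr n
        _ ≤ r * (r ^ n * (Mk 0 - mk 0)) := mul_le_mul_of_nonneg_left ih hr0
        _ = r ^ (n+1) * (Mk 0 - mk 0) := by ring
  have hbound : ∀ k : ℕ, Mk k - mk k ≤ r ^ (k / N) * (Mk 0 - mk 0) := by
    intro k
    have hk : N * (k / N) ≤ k := Nat.mul_div_le k N
    have := sub_le_sub (hManti hk) (hmmono hk)
    exact le_trans this (hgeo (k / N))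
  have hdiv : Tendsto (fun k : ℕ => k / N) atTop atTop := by
    refine tendsto_atTop_atTop.mpr fun b => ⟨b * N, fun a ha => ?_⟩
    exact (Nat.le_div_iff_mul_le (by omega)).mpr ha
  have hs0 : Tendsto (fun k => Mk k - mk k) atTop (nhds 0) := by
    refine squeeze_zero hsnn hbound ?_
    have : Tendsto (fun t : ℕ => r ^ t * (Mk 0 - mk 0)) atTop (nhds 0) := by
      simpa using (tendsto_pow_atTop_nhds_zero_of_lt_one hr0 hr1).mul_const (Mk 0 - mk 0)
    exact this.comp hdiv
  -- invariant
  have hinvstep : ∀ v : Fin N → ℝ, ∑ j, w j * (A.mulVec v) j = ∑ j, w j * v j := by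
    intro v
    simp only [ConsensusAux.mulVec_apply']
    calc ∑ j, w j * ∑ l, A j l * v l = ∑ j, ∑ l, w j * A j l * v l := by
          simp [Finset.mul_sum, ← mul_assoc]
      _ = ∑ l, ∑ j, w j * A j l * v l := Finset.sum_comm
      _ = ∑ l, (∑ j, w j * A j l) * v l := by simp [Finset.sum_mul]
      _ = ∑ l, w l * v l := by simp only [hleft]
  have hinv : ∀ k : ℕ, ∑ j, w j * ((A ^ k).mulVec x0) j = ∑ j, w j * x0 j := by
    intro k
    induction k with
    | zero => simp [Matrix.mulVec_one]
    | succ n ih => rw [hstep n, hinvstep, ih]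
  -- the limit value
  have hW : (0:ℝ) < ∑ j, w j := Finset.sum_pos (fun j _ => hw j) hne
  set L : ℝ := (∑ j, w j * x0 j) / (∑ j, w j) with hL
  have hmL : ∀ k, mk k ≤ L := by
    intro k
    rw [hL, le_div_iff₀ hW]
    calc mk k * ∑ j, w j = ∑ j, w j * mk k := by rw [Finset.mul_sum]; exact Finset.sum_congr rfl fun j _ => by ring
      _ ≤ ∑ j, w j * ((A ^ k).mulVec x0) j := Finset.sum_le_sum fun j _ =>
          mul_le_mul_of_nonneg_left (Finset.inf'_le _ (mem_univ j)) (hw j).le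
      _ = ∑ j, w j * x0 j := hinv k
  have hML : ∀ k, L ≤ Mk k := by
    intro k
    rw [hL, div_le_iff₀ hW]
    calc ∑ j, w j * x0 j = ∑ j, w j * ((A ^ k).mulVec x0) j := (hinv k).symm
      _ ≤ ∑ j, w j * Mk k := Finset.sum_le_sum fun j _ =>
          mul_le_mul_of_nonneg_left (Finset.le_sup' _ (mem_univ j)) (hw j).le
      _ = Mk k * ∑ j, w j := by rw [Finset.mul_sum]; exact Finset.sum_congr rfl fun j _ => by ring
  -- squeeze
  have hub : ∀ k, ((A ^ k).mulVec x0) i ≤ L + (Mk k - mk k) := by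
    intro k
    have := Finset.le_sup' ((A ^ k).mulVec x0) (mem_univ i)
    have := hmL k
    simp only [hMk, hmk] at *
    linarith
  have hlb : ∀ k, L - (Mk k - mk k) ≤ ((A ^ k).mulVec x0) i := by
    intro k
    have := Finset.inf'_le ((A ^ k).mulVec x0) (mem_univ i)
    have := hML k
    simp only [hMk, hmk] at *
    linarith
  have hlim1 : Tendsto (fun k => L - (Mk k - mk k)) atTop (nhds L) := by
    simpa using (tendsto_const_nhds (x := L)).sub hs0
  have hlim2 : Tendsto (fun k => L + (Mk k - mk k)) atTop (nhds L) := by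
    simpa using (tendsto_const_nhds (x := L)).add hs0
  exact tendsto_of_tendsto_of_tendsto_of_le_of_le hlim1 hlim2 hlb hub
end
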